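/- For a commutative monoid M, the monoid-valued functor M^(−) is cancellative if and only if M is a cancellative monoid, i.e., c + a = c + b implies a = b for all a, b, c ∈ M. -/

import Mathlib

/-- Characteristic function of {1,2} ⊆ 3. -/
def chi12 : Fin 3 → Fin 2 := fun t => if t = 0 then 0 else 1

/-- Characteristic function of {2} ⊆ 3. -/
def chi2 : Fin 3 → Fin 2 := fun t => if t = 2 then 1 else 0

lemma decomp {M : Type*} [AddCommMonoid M] (μ : Fin 3 →₀ M) :
    μ = Finsupp.single 0 (μ 0) + Finsupp.single 1 (μ 1) + Finsupp.single 2 (μ 2) := by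
  ext i
  fin_cases i <;> simp [Finsupp.single_apply]

lemma md12 {M : Type*} [AddCommMonoid M] (μ : Fin 3 →₀ M) :
    Finsupp.mapDomain chi12 μ = Finsupp.single 0 (μ 0) + Finsupp.single 1 (μ 1 + μ 2) := by
  conv_lhs => rw [decomp μ]
  simp only [Finsupp.mapDomain_add, Finsupp.mapDomain_single, chi12, Finsupp.single_add]
  norm_num
  abel

lemma md2 {M : Type*} [AddCommMonoid M] (μ : Fin 3 →₀ M) :
    Finsupp.mapDomain chi2 μ = Finsupp.single 0 (μ 0 + μ 1) + Finsupp.single 1 (μ 2) := by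
  conv_lhs => rw [decomp μ]
  simp only [Finsupp.mapDomain_add, Finsupp.mapDomain_single, chi2, Finsupp.single_add]
  norm_num
  ext i; fin_cases i <;> simp [Finsupp.single_apply]

lemma triple_ext {M : Type*} [AddCommMonoid M] (μ ν : Fin 3 →₀ M)
    (h0 : μ 0 = ν 0) (h1 : μ 1 = ν 1) (h2 : μ 2 = ν 2) : μ = ν := by
  ext i; fin_cases i <;> assumption

noncomputable def tri {M : Type*} [AddCommMonoid M] (a b c : M) : Fin 3 →₀ M :=
  Finsupp.single 0 a + Finsupp.single 1 b + Finsupp.single 2 c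

lemma tri0 {M : Type*} [AddCommMonoid M] (a b c : M) : tri a b c 0 = a := by
  simp [tri, Finsupp.single_apply]
lemma tri1 {M : Type*} [AddCommMonoid M] (a b c : M) : tri a b c 1 = b := by
  simp [tri, Finsupp.single_apply]
lemma tri2 {M : Type*} [AddCommMonoid M] (a b c : M) : tri a b c 2 = c := by
  simp [tri, Finsupp.single_apply]

theorem stmt5 (M : Type*) [AddCommMonoid M] :
    Function.Injective (fun μ : Fin 3 →₀ M =>
      (Finsupp.mapDomain chi12 μ, Finsupp.mapDomain chi2 μ)) ↔
    ∀ a b c : M, c + a = c + b → a = b := by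
  constructor
  · intro hinj a b c h
    have key : tri c a c = tri c b c := by
      apply hinj
      simp only [Prod.mk.injEq, md12, md2, tri0, tri1, tri2]
      constructor
      · rw [show a + c = c + a from add_comm _ _, show b + c = c + b from add_comm _ _, h]
      · rw [h]
    have := congrArg (fun f => f (1 : Fin 3)) key
    simpa [tri1] using this
  · intro hcan μ ν h
    simp only [Prod.mk.injEq, md12, md2] at h
    obtain ⟨h1, h2⟩ := h
    have e0 : μ 0 = ν 0 := by
      have := congrArg (fun f => f (0 : Fin 2)) h1
      simpa [Finsupp.single_apply] using this
    have e2 : μ 2 = ν 2 := by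
      have := congrArg (fun f => f (1 : Fin 2)) h2
      simpa [Finsupp.single_apply] using this
    have e01 : μ 0 + μ 1 = ν 0 + ν 1 := by
      have := congrArg (fun f => f (0 : Fin 2)) h2
      simpa [Finsupp.single_apply] using this
    have e1 : μ 1 = ν 1 := hcan _ _ (μ 0) (by rw [e01, e0])
    exact triple_ext μ ν e0 e1 e2
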